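/- Let X be a proper geodesic metric space that is one-ended, and let X̄ = X ∪ ∂X be a metrizable compactification of X (the inclusion X → X̄ is a topological embedding onto a dense open subset, ∂X = X̄ \ X). Assume ∂X is weakly visible: whenever (xₙ) and (yₙ) are sequences in X with d(xₙ, yₙ) uniformly bounded and (xₙ) converges in X̄ to ξ ∈ ∂X, then (yₙ) also converges to ξ. Then ∂X is connected. -/
import Mathlib


theorem stmt_4 {X X' : Type*} [MetricSpace X] [ProperSpace X] [Nonempty X]
    [TopologicalSpace X'] [CompactSpace X'] [TopologicalSpace.MetrizableSpace X']
    (e : X → X') (hemb : Topology.IsEmbedding e)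
    (hdense : Dense (Set.range e)) (hopen : IsOpen (Set.range e))
    -- X is geodesic
    (hgeo : ∀ x y : X, ∃ γ : ℝ → X, γ 0 = x ∧ γ (dist x y) = y ∧
      ∀ s ∈ Set.Icc 0 (dist x y), ∀ t ∈ Set.Icc 0 (dist x y),
        dist (γ s) (γ t) = |s - t|)
    -- X is one-ended: unbounded, and any two points far enough out can be
    -- joined by a path avoiding any prescribed compact set
    (hunbounded : ¬ Bornology.IsBounded (Set.univ : Set X))
    (honeend : ∀ K : Set X, IsCompact K → ∃ K' : Set X, IsCompact K' ∧ K ⊆ K' ∧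
      ∀ x y : X, x ∉ K' → y ∉ K' → ∃ γ : Path x y, ∀ t, γ t ∉ K)
    -- the boundary is weakly visible
    (hvis : ∀ (x y : ℕ → X) (ξ : X'), ξ ∉ Set.range e →
      (∃ K : ℝ, ∀ n, dist (x n) (y n) ≤ K) →
      Filter.Tendsto (fun n => e (x n)) Filter.atTop (nhds ξ) →
      Filter.Tendsto (fun n => e (y n)) Filter.atTop (nhds ξ)) :
    IsConnected (Set.range e)ᶜ := by
  letI : MetricSpace X' := TopologicalSpace.metrizableSpaceMetric X'
  constructor
  · -- nonemptiness of the boundary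
    by_contra h
    rw [Set.not_nonempty_iff_eq_empty, Set.compl_empty_iff] at h
    have hXcompact : IsCompact (Set.univ : Set X) := by
      rw [hemb.isCompact_iff, Set.image_univ, h]
      exact isCompact_univ
    exact hunbounded hXcompact.isBounded
  · -- preconnectedness
    rintro U V hU hV hcover ⟨ξ, hξc, hξU⟩ ⟨η, hηc, hηV⟩
    by_contra hempty
    rw [Set.not_nonempty_iff_eq_empty] at hempty
    -- the two pieces of the boundary
    set A : Set X' := (Set.range e)ᶜ ∩ U with hA
    set B : Set X' := (Set.range e)ᶜ ∩ V with hB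
    have hAeq : A = (Set.range e)ᶜ ∩ Vᶜ := by
      ext p
      constructor
      · rintro ⟨hp, hpU⟩
        refine ⟨hp, fun hpV => ?_⟩
        have : p ∈ (Set.range e)ᶜ ∩ (U ∩ V) := ⟨hp, hpU, hpV⟩
        rw [hempty] at this; exact this
      · rintro ⟨hp, hpV⟩
        rcases hcover hp with hpU | hpV'
        · exact ⟨hp, hpU⟩
        · exact absurd hpV' hpV
    have hBeq : B = (Set.range e)ᶜ ∩ Uᶜ := by
      ext p
      constructor
      · rintro ⟨hp, hpV⟩
        refine ⟨hp, fun hpU => ?_⟩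
        have : p ∈ (Set.range e)ᶜ ∩ (U ∩ V) := ⟨hp, hpU, hpV⟩
        rw [hempty] at this; exact this
      · rintro ⟨hp, hpU⟩
        rcases hcover hp with hpU' | hpV
        · exact absurd hpU' hpU
        · exact ⟨hp, hpV⟩
    have hAclosed : IsClosed A := by
      rw [hAeq]; exact (isClosed_compl_iff.mpr hopen).inter (isClosed_compl_iff.mpr hV)
    have hBclosed : IsClosed B := by
      rw [hBeq]; exact (isClosed_compl_iff.mpr hopen).inter (isClosed_compl_iff.mpr hU)
    have hABdisj : Disjoint A B := by
      rw [Set.disjoint_iff_inter_eq_empty]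
      ext p
      simp only [Set.mem_inter_iff, Set.mem_empty_iff_false, iff_false]
      rintro ⟨⟨hp, hpU⟩, ⟨_, hpV⟩⟩
      have : p ∈ (Set.range e)ᶜ ∩ (U ∩ V) := ⟨hp, hpU, hpV⟩
      rw [hempty] at this; exact this
    -- separate A and B by disjoint open sets
    obtain ⟨U', V', hU'open, hV'open, hAU', hBV', hU'V'⟩ :=
      normal_separation hAclosed hBclosed hABdisj
    -- the compact set away from the boundary
    have hKX'sub : (U' ∪ V')ᶜ ⊆ Set.range e := by
      intro p hp
      by_contra hpe
      rcases hcover hpe with hpU | hpV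
      · exact hp (Or.inl (hAU' ⟨hpe, hpU⟩))
      · exact hp (Or.inr (hBV' ⟨hpe, hpV⟩))
    have hKX'compact : IsCompact ((U' ∪ V')ᶜ : Set X') :=
      (isClosed_compl_iff.mpr (hU'open.union hV'open)).isCompact
    set K : Set X := e ⁻¹' (U' ∪ V')ᶜ with hK
    have hKimage : e '' K = (U' ∪ V')ᶜ := by
      rw [hK, Set.image_preimage_eq_inter_range, Set.inter_eq_left]
      exact hKX'sub
    have hKcompact : IsCompact K := by
      rw [hemb.isCompact_iff, hKimage]; exact hKX'compact
    obtain ⟨K', hK'compact, _, hpath⟩ := honeend K hKcompact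
    -- e '' K' is compact hence closed
    have hK'img : IsCompact (e '' K') := hK'compact.image hemb.continuous
    -- find x near ξ outside K'
    have hξA : ξ ∈ A := ⟨hξc, hξU⟩
    have hηB : η ∈ B := ⟨hηc, hηV⟩
    have hWx : IsOpen (U' ∩ (e '' K')ᶜ) := hU'open.inter hK'img.isClosed.isOpen_compl
    have hξW : ξ ∈ U' ∩ (e '' K')ᶜ := ⟨hAU' hξA, fun h => hξc (Set.image_subset_range e K' h)⟩
    obtain ⟨p, hpW, x, rfl⟩ := hdense.inter_open_nonempty _ hWx ⟨ξ, hξW⟩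
    have hWy : IsOpen (V' ∩ (e '' K')ᶜ) := hV'open.inter hK'img.isClosed.isOpen_compl
    have hηW : η ∈ V' ∩ (e '' K')ᶜ := ⟨hBV' hηB, fun h => hηc (Set.image_subset_range e K' h)⟩
    obtain ⟨q, hqW, y, rfl⟩ := hdense.inter_open_nonempty _ hWy ⟨η, hηW⟩
    have hxK' : x ∉ K' := fun h => hpW.2 ⟨x, h, rfl⟩
    have hyK' : y ∉ K' := fun h => hqW.2 ⟨y, h, rfl⟩
    obtain ⟨γ, hγ⟩ := hpath x y hxK' hyK'
    -- the image of the path is connected, in U' ∪ V', meeting both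
    have hconn : IsPreconnected (Set.range (fun t => e (γ t))) :=
      (isConnected_range (hemb.continuous.comp γ.continuous)).isPreconnected
    have hsub : Set.range (fun t => e (γ t)) ⊆ U' ∪ V' := by
      rintro _ ⟨t, rfl⟩
      by_contra h
      exact hγ t h
    have hmeetU' : (Set.range (fun t => e (γ t)) ∩ U').Nonempty :=
      ⟨e (γ 0), ⟨0, rfl⟩, by rw [γ.source]; exact hpW.1⟩
    have hmeetV' : (Set.range (fun t => e (γ t)) ∩ V').Nonempty :=
      ⟨e (γ 1), ⟨1, rfl⟩, by rw [γ.target]; exact hqW.1⟩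
    obtain ⟨z, _, hzU', hzV'⟩ := hconn U' V' hU'open hV'open hsub hmeetU' hmeetV'
    exact hU'V'.ne_of_mem hzU' hzV' rfl
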